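/- There exists ℓ₀ ∈ ℕ such that for every integer ℓ ≥ ℓ₀, every μ > 0, every c > 0, and every measurable G : ℝ → ℂ with |G(p)| ≤ c·(1+p²)^{−ℓ} for all p ∈ ℝ, the function (θ₁, θ₂) ↦ cosh²((θ₁ − θ₂)/2) · |G(μ cosh θ₁ − μ cosh θ₂)|² · (1 + cosh θ₂)^{−2ℓ} is integrable on ℝ². -/

import Mathlib

open MeasureTheory

lemma integrable_inv_one_add_cosh : Integrable (fun x : ℝ => (1 + Real.cosh x)⁻¹) := by
  have hmeas : AEStronglyMeasurable (fun x : ℝ => (1 + Real.cosh x)⁻¹) volume :=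
    ((measurable_const.add Real.measurable_cosh).inv).aestronglyMeasurable
  have hpos : ∀ x : ℝ, (0:ℝ) < 1 + Real.cosh x := fun x => by
    have := Real.one_le_cosh x; linarith
  rw [← integrableOn_univ, ← Set.Iic_union_Ioi (a := (0:ℝ))]
  apply IntegrableOn.union
  · apply Integrable.mono' ((integrableOn_exp_Iic 0).const_mul 2) hmeas.restrict
    filter_upwards with x
    rw [Real.norm_eq_abs, abs_of_nonneg (inv_nonneg.2 (hpos x).le)]
    rw [inv_le_comm₀ (hpos x) (by positivity)]
    have h1 : Real.exp (-x) / 2 ≤ Real.cosh x := by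
      rw [Real.cosh_eq]; have := Real.exp_pos x; linarith [Real.exp_pos (-x)]
    have h2 : (2 * Real.exp x)⁻¹ = Real.exp (-x) / 2 := by
      rw [Real.exp_neg]; field_simp
    rw [h2]; linarith
  · apply Integrable.mono' ((exp_neg_integrableOn_Ioi 0 (one_pos)).const_mul 2) hmeas.restrict
    filter_upwards with x
    rw [Real.norm_eq_abs, abs_of_nonneg (inv_nonneg.2 (hpos x).le)]
    have h1 : Real.exp x / 2 ≤ Real.cosh x := by
      rw [Real.cosh_eq]; have := Real.exp_pos (-x); linarith
    rw [inv_le_comm₀ (hpos x) (by positivity)]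
    have h2 : (2 * Real.exp (-1 * x))⁻¹ = Real.exp x / 2 := by
      rw [neg_one_mul, Real.exp_neg]; field_simp
    rw [h2]; linarith


set_option maxHeartbeats 1000000 in
lemma f11_pointwise (ℓ : ℕ) (hℓ : 2 ≤ ℓ) (μ c : ℝ) (hμ : 0 < μ) (hc : 0 < c)
    (G : ℝ → ℂ) (hGb : ∀ p : ℝ, ‖G p‖ ≤ c / (1 + p ^ 2) ^ ℓ) (u v : ℝ) :
    Real.cosh ((u - v) / 2) ^ 2 *
      ‖G (μ * Real.cosh u - μ * Real.cosh v)‖ ^ 2 *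
      ((1 + Real.cosh v) ^ (2 * ℓ))⁻¹ ≤
    (c ^ 2 * (1 + 1 / (2 * μ)) ^ ℓ) * ((1 + Real.cosh u)⁻¹ * (1 + Real.cosh v)⁻¹) := by
  set a := Real.cosh u with ha_def
  set b := Real.cosh v with hb_def
  have ha : 1 ≤ a := Real.one_le_cosh u
  have hb : 1 ≤ b := Real.one_le_cosh v
  set D := μ * a - μ * b with hD_def
  set A := 1 + a with hA_def
  set B := 1 + b with hB_def
  set Q := 1 + D ^ 2 with hQ_def
  set K := 1 + 1 / (2 * μ) with hK_def
  have hA0 : (0:ℝ) < A := by simp only [hA_def]; linarith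
  have hB0 : (0:ℝ) < B := by simp only [hB_def]; linarith
  have hQ1 : (1:ℝ) ≤ Q := by simp only [hQ_def]; nlinarith [sq_nonneg D]
  have hQ0 : (0:ℝ) < Q := by linarith
  have hK1 : (1:ℝ) ≤ K := by
    simp only [hK_def]
    have : 0 < 1 / (2 * μ) := by positivity
    linarith
  -- Step 1: cosh((u-v)/2)^2 ≤ A * B
  have h_ch : Real.cosh ((u - v) / 2) ^ 2 ≤ A * B := by
    have e1 : Real.cosh (2 * ((u - v) / 2)) =
        Real.cosh ((u - v) / 2) ^ 2 + Real.sinh ((u - v) / 2) ^ 2 := Real.cosh_two_mul _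
    rw [show 2 * ((u - v) / 2) = u - v by ring] at e1
    have e2 : Real.sinh ((u - v) / 2) ^ 2 = Real.cosh ((u - v) / 2) ^ 2 - 1 :=
      Real.sinh_sq _
    have e3 : Real.cosh (u - v) = a * b - Real.sinh u * Real.sinh v := Real.cosh_sub u v
    have s1 : Real.sinh u ^ 2 = a ^ 2 - 1 := Real.sinh_sq u
    have s2 : Real.sinh v ^ 2 = b ^ 2 - 1 := Real.sinh_sq v
    nlinarith [sq_nonneg (Real.sinh u * Real.sinh v + a * b), sq_nonneg (a - b),
      sq_nonneg (a*b - 1), mul_pos (show (0:ℝ) < a by linarith) (show (0:ℝ) < b by linarith)]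
  -- Step 2: |G D|^2 ≤ c^2 / ((1+D^2)^ℓ)^2
  have hQl : (0:ℝ) < Q ^ ℓ := by positivity
  have hG2 : ‖G D‖ ^ 2 ≤ c ^ 2 / (Q ^ ℓ) ^ 2 := by
    have h := hGb D
    have h2 : ‖G D‖ ^ 2 ≤ (c / Q ^ ℓ) ^ 2 :=
      pow_le_pow_left₀ (norm_nonneg _) h 2
    rwa [div_pow] at h2
  -- Step 3: A ≤ K * (B * Q)
  have hAK : A ≤ K * (B * Q) := by
    have habs : |D| = μ * |a - b| := by
      rw [hD_def, ← mul_sub, abs_mul, abs_of_pos hμ]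
    have hDQ : 2 * |D| ≤ Q := by
      simp only [hQ_def]; nlinarith [sq_abs D, sq_nonneg (|D| - 1)]
    have hab : a - b ≤ |a - b| := le_abs_self _
    have habnn : 0 ≤ |a - b| := abs_nonneg _
    have h2m : 2 * μ * |a - b| ≤ Q := by rw [habs] at hDQ; linarith
    have h2mu : (0:ℝ) < 2 * μ := by linarith
    have hgoal : 2 * μ * A ≤ 2 * μ * (K * (B * Q)) := by
      have hKe : 2 * μ * (K * (B * Q)) = (2 * μ + 1) * (B * Q) := by
        simp only [hK_def]; field_simp
      rw [hKe]
      have hA_le : A ≤ B + |a - b| := by simp only [hA_def, hB_def]; linarith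
      have f1 : 2 * μ * A ≤ 2 * μ * (B + |a - b|) :=
        mul_le_mul_of_nonneg_left hA_le h2mu.le
      have f2 : 2 * μ * B ≤ 2 * μ * (B * Q) :=
        mul_le_mul_of_nonneg_left (le_mul_of_one_le_right hB0.le hQ1) h2mu.le
      have f3 : Q ≤ B * Q := le_mul_of_one_le_left hQ0.le (by linarith)
      nlinarith [h2m, f1, f2, f3]
    exact le_of_mul_le_mul_left hgoal h2mu
  -- Step 4: master polynomial inequality
  have hmain : A ^ 2 * B ^ 2 ≤ K ^ ℓ * (Q ^ (2 * ℓ) * B ^ (2 * ℓ)) := by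
    have h1 : A ^ 2 ≤ (K * (B * Q)) ^ 2 := pow_le_pow_left₀ hA0.le hAK 2
    have hK2 : K ^ 2 ≤ K ^ ℓ := pow_le_pow_right₀ hK1 hℓ
    have hB4 : B ^ 4 ≤ B ^ (2 * ℓ) := pow_le_pow_right₀ (by linarith) (by omega)
    have hQ2 : Q ^ 2 ≤ Q ^ (2 * ℓ) := pow_le_pow_right₀ hQ1 (by omega)
    calc A ^ 2 * B ^ 2 ≤ (K * (B * Q)) ^ 2 * B ^ 2 := by nlinarith [sq_nonneg B]
      _ = K ^ 2 * Q ^ 2 * B ^ 4 := by ring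
      _ ≤ K ^ ℓ * Q ^ (2 * ℓ) * B ^ (2 * ℓ) := by
          apply mul_le_mul (mul_le_mul hK2 hQ2 (by positivity) (by positivity)) hB4
            (by positivity) (by positivity)
      _ = K ^ ℓ * (Q ^ (2 * ℓ) * B ^ (2 * ℓ)) := by ring
  -- assemble
  have hPQ : (Q ^ ℓ) ^ 2 = Q ^ (2 * ℓ) := by rw [← pow_mul, Nat.mul_comm]
  have step1 : Real.cosh ((u - v) / 2) ^ 2 * ‖G D‖ ^ 2 * (B ^ (2 * ℓ))⁻¹ ≤
      (A * B) * (c ^ 2 / (Q ^ ℓ) ^ 2) * (B ^ (2 * ℓ))⁻¹ := by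
    apply mul_le_mul_of_nonneg_right _ (by positivity)
    exact mul_le_mul h_ch hG2 (by positivity) (by positivity)
  refine le_trans step1 ?_
  have e1 : (A * B) * (c ^ 2 / (Q ^ ℓ) ^ 2) * (B ^ (2 * ℓ))⁻¹ =
      (A * B * c ^ 2) / ((Q ^ ℓ) ^ 2 * B ^ (2 * ℓ)) := by ring
  have e2 : (c ^ 2 * K ^ ℓ) * (A⁻¹ * B⁻¹) = (c ^ 2 * K ^ ℓ) / (A * B) := by rw [div_eq_mul_inv, mul_inv]
  rw [e1, e2, div_le_div_iff₀ (by positivity) (by positivity), hPQ]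
  calc A * B * c ^ 2 * (A * B) = c ^ 2 * (A ^ 2 * B ^ 2) := by ring
    _ ≤ c ^ 2 * (K ^ ℓ * (Q ^ (2 * ℓ) * B ^ (2 * ℓ))) := by
        exact mul_le_mul_of_nonneg_left hmain (by positivity)
    _ = c ^ 2 * K ^ ℓ * (Q ^ (2 * ℓ) * B ^ (2 * ℓ)) := by ring

theorem f11_weighted_square_integrable :
    ∃ ℓ₀ : ℕ, ∀ ℓ : ℕ, ℓ₀ ≤ ℓ → ∀ (μ c : ℝ), 0 < μ → 0 < c →
      ∀ G : ℝ → ℂ, Measurable G →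
      (∀ p : ℝ, ‖G p‖ ≤ c / (1 + p ^ 2) ^ ℓ) →
      Integrable (fun θ : ℝ × ℝ =>
        Real.cosh ((θ.1 - θ.2) / 2) ^ 2 *
          ‖G (μ * Real.cosh θ.1 - μ * Real.cosh θ.2)‖ ^ 2 *
          ((1 + Real.cosh θ.2) ^ (2 * ℓ))⁻¹) := by
  refine ⟨2, fun ℓ hℓ μ c hμ hc G hGmeas hGb => ?_⟩
  have hdom : Integrable (fun θ : ℝ × ℝ =>
      (c ^ 2 * (1 + 1 / (2 * μ)) ^ ℓ) *
        ((1 + Real.cosh θ.1)⁻¹ * (1 + Real.cosh θ.2)⁻¹)) := by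
    have h2 : Integrable (fun θ : ℝ × ℝ =>
        (1 + Real.cosh θ.1)⁻¹ * (1 + Real.cosh θ.2)⁻¹) := by
      rw [show (volume : Measure (ℝ × ℝ)) = volume.prod volume from Measure.volume_eq_prod ℝ ℝ]
      exact integrable_inv_one_add_cosh.mul_prod integrable_inv_one_add_cosh
    exact h2.const_mul _
  have hmeas : AEStronglyMeasurable (fun θ : ℝ × ℝ =>
      Real.cosh ((θ.1 - θ.2) / 2) ^ 2 *
        ‖G (μ * Real.cosh θ.1 - μ * Real.cosh θ.2)‖ ^ 2 *
        ((1 + Real.cosh θ.2) ^ (2 * ℓ))⁻¹) volume := by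
    have h1 : Measurable fun θ : ℝ × ℝ => Real.cosh ((θ.1 - θ.2) / 2) ^ 2 :=
      (Real.measurable_cosh.comp ((measurable_fst.sub measurable_snd).div_const 2)).pow_const 2
    have h2 : Measurable fun θ : ℝ × ℝ =>
        ‖G (μ * Real.cosh θ.1 - μ * Real.cosh θ.2)‖ ^ 2 :=
      ((continuous_norm.measurable.comp (hGmeas.comp
        (((Real.measurable_cosh.comp measurable_fst).const_mul μ).sub
          ((Real.measurable_cosh.comp measurable_snd).const_mul μ)))).pow_const 2)
    have h3 : Measurable fun θ : ℝ × ℝ => ((1 + Real.cosh θ.2) ^ (2 * ℓ))⁻¹ :=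
      ((measurable_const.add (Real.measurable_cosh.comp measurable_snd)).pow_const (2 * ℓ)).inv
    exact ((h1.mul h2).mul h3).aestronglyMeasurable
  refine hdom.mono' hmeas ?_
  filter_upwards with θ
  have hnn : 0 ≤ Real.cosh ((θ.1 - θ.2) / 2) ^ 2 *
      ‖G (μ * Real.cosh θ.1 - μ * Real.cosh θ.2)‖ ^ 2 *
      ((1 + Real.cosh θ.2) ^ (2 * ℓ))⁻¹ := by
    have h0 : (0:ℝ) < 1 + Real.cosh θ.2 := by linarith [Real.one_le_cosh θ.2]
    positivity
  rw [Real.norm_eq_abs, abs_of_nonneg hnn]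
  exact f11_pointwise ℓ hℓ μ c hμ hc G hGb θ.1 θ.2
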